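/- In the six-symbol bosonic Weyl system realizing the fields β(z), β*(z), ε_1(z), ε_1*(z), ε_2(z), ε_2*(z), with x_0⁺(m) := ½(:β*e*:)(m), x_0⁻(m) := ½(:βe:)(m) and α_0(m) := −½[(:ee*:)(m) + (:eβ*:)(m) + (:βe*:)(m) + (:ββ*:)(m)], the affine (0-node) commutation relation holds in mode form: for all m, n ∈ ℤ, x_0⁺(m)x_0⁻(n) − x_0⁻(n)x_0⁺(m) = −½·α_0(m+n) + ((m−1)/2)·δ_{m+n,0}·id. (This is the precise mode form, with the normal-ordering convention fixed in the context, of the computation [x_0^+(z), x_0^-(w)] = ¼{(:ε_1ε_1^*: + :ε_1β^*: + :βε_1^*: + :ββ^*:)(w)δ(z−w) + 2∂_wδ(z−w)} = −(2/(α_0,α_0)){α_0(w)δ(z−w) + ∂_wδ(z−w)·(−1)} from the proof of Theorem 3.5, where (α_0,α_0) = 4 and the central element K acts by −1.) -/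
import Mathlib


noncomputable section

/-- A *bosonic Weyl system* over a set `S` of symbols with pairing `pair : S → S → ℂ`
on a complex vector space `W`: a family of operators `op u k` (`u ∈ S`, `k ∈ ℤ`)
such that `[op u k, op v l] = ⟨u,v⟩ δ_{k+l,0} id`. -/
def IsBosonicWeylSystem {S W : Type*} [AddCommGroup W] [Module ℂ W]
    (pair : S → S → ℂ) (op : S → ℤ → Module.End ℂ W) : Prop :=
  ∀ u v : S, ∀ k l : ℤ,
    op u k * op v l - op v l * op u k =
      if k + l = 0 then pair u v • (1 : Module.End ℂ W) else 0

/-- A family of operators is *locally annihilating* if for every vector `w` and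
every symbol `u`, `op u k w = 0` for all sufficiently large `k`. -/
def LocallyAnnihilating {S W : Type*} [AddCommGroup W] [Module ℂ W]
    (op : S → ℤ → Module.End ℂ W) : Prop :=
  ∀ (w : W) (u : S), ∃ K : ℤ, ∀ k : ℤ, K ≤ k → op u k w = 0

/-- The normally ordered quadratic mode
`(:uv:)(m) = Σ_{j<0} u(j)v(m-j) + Σ_{j≥0} v(m-j)u(j)` applied to a vector `w`;
on a locally annihilating system all but finitely many summands vanish, so the
`finsum` computes the intended (finite) sum. -/
def noMode {S W : Type*} [AddCommGroup W] [Module ℂ W]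
    (op : S → ℤ → Module.End ℂ W) (u v : S) (m : ℤ) (w : W) : W :=
  ∑ᶠ j : ℤ, if j < 0 then op u j (op v (m - j) w) else op v (m - j) (op u j w)

end

/-- The six symbols `β, β*, ε₁, ε₁*, ε₂, ε₂*`: the symbol `(i, false)` is the plain
symbol (`0 = β`, `1 = ε₁ = e`, `2 = ε₂ = f`) and `(i, true)` the starred one. -/
abbrev WSym6 : Type := Fin 3 × Bool

/-- The Gram values `g(β,β) = g(β,e) = g(e,β) = g(e,e) = g(f,f) = 1`, `g(β,f) = g(e,f) = 0`. -/
noncomputable def gram6 : Fin 3 → Fin 3 → ℂ := !![1, 1, 0; 1, 1, 0; 0, 0, 1]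

/-- The pairing `⟨u, v*⟩ = -g(u,v)`, `⟨u*, v⟩ = g(u,v)`, `⟨u,v⟩ = ⟨u*,v*⟩ = 0`. -/
noncomputable def pair6 : WSym6 → WSym6 → ℂ
  | (i, false), (j, true) => -gram6 i j
  | (i, true), (j, false) => gram6 i j
  | _, _ => 0

section
variable {W : Type*} [AddCommGroup W] [Module ℂ W] (op : WSym6 → ℤ → Module.End ℂ W)

/-- `x₀⁺(m) = ½ (:β*e*:)(m)` (applied to a vector). -/
noncomputable def xZeroPlus (m : ℤ) (w : W) : W :=
  (1 / 2 : ℂ) • noMode op (0, true) (1, true) m w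

/-- `x₀⁻(m) = ½ (:βe:)(m)` (applied to a vector). -/
noncomputable def xZeroMinus (m : ℤ) (w : W) : W :=
  (1 / 2 : ℂ) • noMode op (0, false) (1, false) m w

/-- `x₁⁺(m) = √-1 (:ef*:)(m)` (applied to a vector). -/
noncomputable def xOnePlus (m : ℤ) (w : W) : W :=
  Complex.I • noMode op (1, false) (2, true) m w

/-- `α₀(m) = -½[(:ee*:)(m) + (:eβ*:)(m) + (:βe*:)(m) + (:ββ*:)(m)]` (applied to a vector). -/
noncomputable def alZero (m : ℤ) (w : W) : W :=
  (-(1 / 2) : ℂ) • (noMode op (1, false) (1, true) m w + noMode op (1, false) (0, true) m w +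
    noMode op (0, false) (1, true) m w + noMode op (0, false) (0, true) m w)

end

/-- The commutator `[A, B] = AB - BA` of two (pointwise-defined) operators. -/
def brkt {W : Type*} [AddCommGroup W] (A B : W → W) : W → W := fun w => A (B w) - B (A w)


noncomputable section Aux
variable {W : Type*} [AddCommGroup W] [Module ℂ W]
  (op : WSym6 → ℤ → Module.End ℂ W)

/-- The `j`-th term of the normally ordered mode. -/
def tmf (u v : WSym6) (m : ℤ) (w : W) (j : ℤ) : W :=
  if j < 0 then op u j (op v (m - j) w) else op v (m - j) (op u j w)

lemma noMode_eq_tmf (u v : WSym6) (m : ℤ) (w : W) :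
    noMode op u v m w = ∑ᶠ j, tmf op u v m w j := rfl

lemma tmf_support (hA : LocallyAnnihilating op) (u v : WSym6) (m : ℤ) (w : W) :
    (Function.support (tmf op u v m w)).Finite := by
  obtain ⟨K1, hK1⟩ := hA w u
  obtain ⟨K2, hK2⟩ := hA w v
  apply Set.Finite.subset (Set.finite_Ioo (min (m - K2) (-1)) (max K1 1))
  intro j hj
  simp only [Function.mem_support, tmf] at hj
  by_cases h : j < 0
  · rw [if_pos h] at hj
    have h2 : ¬ (K2 ≤ m - j) := fun hc => hj (by rw [hK2 _ hc, map_zero])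
    constructor
    · exact lt_of_le_of_lt (min_le_left _ _) (by omega)
    · exact lt_of_lt_of_le (by omega) (le_max_right _ _)
  · rw [if_neg h] at hj
    have h1 : ¬ (K1 ≤ j) := fun hc => hj (by rw [hK1 _ hc, map_zero])
    constructor
    · exact lt_of_le_of_lt (min_le_right _ _) (by omega)
    · exact lt_of_lt_of_le (by omega) (le_max_left _ _)

lemma tmf_zero (u v : WSym6) (m : ℤ) (j : ℤ) : tmf op u v m (0 : W) j = 0 := by
  unfold tmf; split <;> simp

lemma tmf_add (u v : WSym6) (m : ℤ) (w₁ w₂ : W) (j : ℤ) :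
    tmf op u v m (w₁ + w₂) j = tmf op u v m w₁ j + tmf op u v m w₂ j := by
  unfold tmf; split <;> simp

lemma noMode_add (hA : LocallyAnnihilating op) (u v : WSym6) (m : ℤ) (w₁ w₂ : W) :
    noMode op u v m (w₁ + w₂) = noMode op u v m w₁ + noMode op u v m w₂ := by
  simp only [noMode_eq_tmf]
  rw [← finsum_add_distrib (tmf_support op hA u v m w₁) (tmf_support op hA u v m w₂)]
  exact finsum_congr fun j => tmf_add op u v m w₁ w₂ j

lemma noMode_smul (u v : WSym6) (m : ℤ) (c : ℂ) (w : W) :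
    noMode op u v m (c • w) = c • noMode op u v m w := by
  simp only [noMode_eq_tmf]
  have : ∀ j, tmf op u v m (c • w) j = c • tmf op u v m w j := by
    intro j; unfold tmf; split <;> simp
  rw [finsum_congr this]
  exact (smul_finsum c _).symm

/-- The mode operator bundled as an additive hom. -/
def noModeHom (hA : LocallyAnnihilating op) (u v : WSym6) (m : ℤ) : W →+ W :=
  AddMonoidHom.mk' (noMode op u v m) (noMode_add op hA u v m)

lemma op_comm_apply (hW : IsBosonicWeylSystem pair6 op) (u v : WSym6) (k l : ℤ) (x : W) :
    op u k (op v l x) = op v l (op u k x) +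
      (if k + l = 0 then pair6 u v • x else 0) := by
  have h := congrArg (fun T : Module.End ℂ W => T x) (hW u v k l)
  simp only [LinearMap.sub_apply, Module.End.mul_apply] at h
  split at h <;> split
  · simp only [LinearMap.smul_apply, Module.End.one_apply] at h
    rw [eq_add_of_sub_eq h]; exact add_comm _ _
  · omega
  · omega
  · rw [add_zero, ← sub_eq_zero]
    simpa using h

lemma op_comm_apply_zero (hW : IsBosonicWeylSystem pair6 op) {u v : WSym6}
    (h0 : pair6 u v = 0) (k l : ℤ) (x : W) :
    op u k (op v l x) = op v l (op u k x) := by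
  rw [op_comm_apply op hW u v k l x, h0]; simp

lemma tmf_comm (hW : IsBosonicWeylSystem pair6 op) {u v : WSym6}
    (h0 : pair6 v u = 0) (m : ℤ) (w : W) (j : ℤ) :
    tmf op u v m w j = op u j (op v (m - j) w) := by
  unfold tmf; split
  · rfl
  · exact op_comm_apply_zero op hW h0 (m - j) j w

end Aux

section Key
variable {W : Type*} [AddCommGroup W] [Module ℂ W]
  (op : WSym6 → ℤ → Module.End ℂ W)

/-- Commutator of a normally ordered mode of two mutually commuting fields
with a single field mode. -/
lemma key_comm (hW : IsBosonicWeylSystem pair6 op) (hA : LocallyAnnihilating op)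
    {u v : WSym6} (hvu : pair6 v u = 0)
    (m : ℤ) (x : WSym6) (k : ℤ) (w : W) :
    noMode op u v m (op x k w) - op x k (noMode op u v m w) =
      pair6 v x • op u (m + k) w + pair6 u x • op v (m + k) w := by
  have hpull : op x k (noMode op u v m w) = ∑ᶠ j, op x k (tmf op u v m w j) := by
    rw [noMode_eq_tmf]
    exact (op x k).toAddMonoidHom.map_finsum (tmf_support op hA u v m w)
  rw [noMode_eq_tmf, hpull, ← finsum_sub_distrib (tmf_support op hA u v m (op x k w))
    ((tmf_support op hA u v m w).subset (by
      intro j hj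
      simp only [Function.mem_support] at hj ⊢
      intro hc; exact hj (by rw [hc, map_zero])))]
  have hterm : ∀ j : ℤ, tmf op u v m (op x k w) j - op x k (tmf op u v m w j) =
      (if j = m + k then pair6 v x • op u j w else 0) +
        (if j = -k then pair6 u x • op v (m - j) w else 0) := by
    intro j
    rw [tmf_comm op hW hvu, tmf_comm op hW hvu]
    rw [op_comm_apply op hW v x (m - j) k w]
    rw [map_add, op_comm_apply op hW u x j k ((op v (m - j)) w)]
    have h1 : (if m - j + k = 0 then pair6 v x • w else 0) =
        (if j = m + k then pair6 v x • w else 0) := by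
      congr 1; simp only [eq_iff_iff]; omega
    have h2 : (if j + k = 0 then pair6 u x • (op v (m - j)) w else 0) =
        (if j = -k then pair6 u x • (op v (m - j)) w else 0) := by
      congr 1; simp only [eq_iff_iff]; omega
    rw [h1, h2]
    split <;> split <;> simp [map_zero, map_smul] <;> abel
  rw [finsum_congr hterm, finsum_add_distrib, finsum_eq_single _ (m + k)
    (fun b hb => if_neg hb), finsum_eq_single _ (-k) (fun b hb => if_neg hb)]
  · rw [if_pos rfl, if_pos rfl]
    have : m - -k = m + k := by omega
    rw [this]
  · apply Set.Finite.subset (Set.finite_singleton (m + k))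
    intro j hj
    simp only [Function.mem_support] at hj
    by_contra hc
    exact hj (if_neg hc)
  · apply Set.Finite.subset (Set.finite_singleton (-k))
    intro j hj
    simp only [Function.mem_support] at hj
    by_contra hc
    exact hj (if_neg hc)

end Key

section Mid
variable {W : Type*} [AddCommGroup W] [Module ℂ W]
  (op : WSym6 → ℤ → Module.End ℂ W)

lemma noMode_zero (u v : WSym6) (m : ℤ) : noMode op u v m (0 : W) = 0 := by
  rw [noMode_eq_tmf, finsum_congr (tmf_zero op u v m), finsum_zero]

/-- `v(p) (u(q) w)` equals the normally ordered term plus a contraction. -/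
lemma op_tmf (hW : IsBosonicWeylSystem pair6 op) (u v : WSym6) (p q : ℤ) (w : W) :
    op v p (op u q w) = tmf op u v (p + q) w q +
      (if q < 0 ∧ p + q = 0 then pair6 v u • w else 0) := by
  have hM : p + q - q = p := by ring
  by_cases hq : q < 0
  · unfold tmf
    rw [if_pos hq, hM, op_comm_apply op hW v u p q w]
    simp [hq]
  · unfold tmf
    rw [if_neg hq, hM]
    simp [hq]

/-- `u(q) (v(p) w)` equals the normally ordered term plus a contraction. -/
lemma op_tmf' (hW : IsBosonicWeylSystem pair6 op) (u v : WSym6) (p q : ℤ) (w : W) :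
    op u q (op v p w) = tmf op u v (p + q) w q +
      (if 0 ≤ q ∧ p + q = 0 then pair6 u v • w else 0) := by
  have hM : p + q - q = p := by ring
  by_cases hq : q < 0
  · unfold tmf
    rw [if_pos hq, hM]
    simp [show ¬ (0 ≤ q) by omega]
  · unfold tmf
    rw [if_neg hq, hM, op_comm_apply op hW u v q p w]
    have hc : (0 ≤ q ∧ p + q = 0) ↔ (q + p = 0) := by omega
    rw [if_congr hc rfl rfl]

lemma hsum_coeff (n : ℤ) :
    ∑ᶠ k : ℤ, ((if n < k then (2:ℂ) else 0) + (if 0 ≤ k then (-2:ℂ) else 0)) =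
      -2 * ((n : ℂ) + 1) := by
  have hco : ∀ k : ℤ, ((if n < k then (2:ℂ) else 0) + (if 0 ≤ k then (-2:ℂ) else 0)) =
      ((if k ∈ Finset.Icc 0 n then (-2:ℂ) else 0) +
        (if k ∈ Finset.Icc (n+1) (-1) then (2:ℂ) else 0)) := by
    intro k
    simp only [Finset.mem_Icc]
    split_ifs <;> first | omega | norm_num
  rw [finsum_congr hco, finsum_add_distrib]
  · rw [finsum_eq_finset_sum_of_support_subset _ (s := Finset.Icc 0 n) (by
      intro k hk
      simp only [Function.mem_support] at hk
      by_contra hc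
      exact hk (if_neg hc)),
      finsum_eq_finset_sum_of_support_subset _ (s := Finset.Icc (n+1) (-1)) (by
      intro k hk
      simp only [Function.mem_support] at hk
      by_contra hc
      exact hk (if_neg hc)),
      Finset.sum_congr rfl (fun i hi => if_pos hi),
      Finset.sum_congr rfl (fun i hi => if_pos hi),
      Finset.sum_const, Finset.sum_const, Int.card_Icc, Int.card_Icc,
      nsmul_eq_mul, nsmul_eq_mul]
    rcases le_or_gt 0 n with h | h
    · rw [Int.toNat_of_nonpos (show (-1:ℤ)+1-(n+1) ≤ 0 by omega), show ((n+1-0).toNat : ℂ) = (n:ℂ) + 1 by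
        rw [← Int.cast_natCast, Int.toNat_of_nonneg (by omega)]; push_cast; ring]
      push_cast
      ring
    · rw [Int.toNat_of_nonpos (show n+1-0 ≤ 0 by omega), show (((-1:ℤ)+1-(n+1)).toNat : ℂ) = -(n:ℂ) - 1 by
        rw [← Int.cast_natCast, Int.toNat_of_nonneg (by omega)]; push_cast; ring]
      push_cast
      ring
  · apply Set.Finite.subset (Finset.Icc 0 n).finite_toSet
    intro k hk
    simp only [Function.mem_support] at hk
    by_contra hc
    exact hk (if_neg hc)
  · apply Set.Finite.subset (Finset.Icc (n+1) (-1)).finite_toSet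
    intro k hk
    simp only [Function.mem_support] at hk
    by_contra hc
    exact hk (if_neg hc)

end Mid

section PV
example : pair6 (0, true) (1, true) = 0 := rfl
example : pair6 (1, true) (0, true) = 0 := rfl
example : pair6 (1, false) (0, false) = 0 := rfl
lemma pv_bc : pair6 (1, true) (0, false) = 1 := by
  simp [pair6, gram6]
lemma pv_ac : pair6 (0, true) (0, false) = 1 := by
  simp [pair6, gram6]
lemma pv_bd : pair6 (1, true) (1, false) = 1 := by
  simp [pair6, gram6]
lemma pv_ad : pair6 (0, true) (1, false) = 1 := by
  simp [pair6, gram6]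
lemma pv_ca : pair6 (0, false) (0, true) = -1 := by
  simp [pair6, gram6]
lemma pv_cb : pair6 (0, false) (1, true) = -1 := by
  simp [pair6, gram6]
lemma pv_ba : pair6 (1, true) (0, true) = 0 := rfl
lemma pv_dc : pair6 (1, false) (0, false) = 0 := rfl
end PV

section Main
variable {W : Type*} [AddCommGroup W] [Module ℂ W]
  (op : WSym6 → ℤ → Module.End ℂ W)

lemma coeff_support (n : ℤ) :
    (Function.support fun k : ℤ =>
      ((if n < k then (2:ℂ) else 0) + (if 0 ≤ k then (-2:ℂ) else 0))).Finite := by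
  apply Set.Finite.subset (Set.finite_Icc (min 0 (n+1)) (max n (-1)))
  intro k hk
  simp only [Function.mem_support, ne_eq] at hk
  by_contra hc
  simp only [Set.mem_Icc, not_and_or, not_le] at hc
  apply hk
  split_ifs <;> first | omega | norm_num

lemma main_comm (hW : IsBosonicWeylSystem pair6 op) (hA : LocallyAnnihilating op)
    (m n : ℤ) (w : W) :
    noMode op (0, true) (1, true) m (noMode op (0, false) (1, false) n w) -
      noMode op (0, false) (1, false) n (noMode op (0, true) (1, true) m w) =
      noMode op (1, false) (1, true) (m + n) w + noMode op (1, false) (0, true) (m + n) w +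
        noMode op (0, false) (1, true) (m + n) w + noMode op (0, false) (0, true) (m + n) w +
        (if m + n = 0 then (2 * (m : ℂ) - 2) • w else 0) := by
  -- Step 1: pull the outer `noMode` through the finsum
  have h1 : noMode op (0,true) (1,true) m (noMode op (0,false) (1,false) n w) =
      ∑ᶠ k, noMode op (0,true) (1,true) m (tmf op (0,false) (1,false) n w k) := by
    rw [noMode_eq_tmf op (0,false) (1,false) n w]
    exact (noModeHom op hA (0,true) (1,true) m).map_finsum (tmf_support op hA _ _ _ _)
  -- per-k computation
  have hper : ∀ k : ℤ,
      noMode op (0,true) (1,true) m (tmf op (0,false) (1,false) n w k) -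
        tmf op (0,false) (1,false) n (noMode op (0,true) (1,true) m w) k =
      tmf op (1,false) (1,true) (m+n) w (n-k) + tmf op (1,false) (0,true) (m+n) w (n-k) +
        tmf op (0,false) (1,true) (m+n) w k + tmf op (0,false) (0,true) (m+n) w k +
        (if m + n = 0 then
          ((if n < k then (2:ℂ) else 0) + (if 0 ≤ k then (-2:ℂ) else 0)) • w else 0) := by
    intro k
    rw [tmf_comm op hW pv_dc, tmf_comm op hW pv_dc]
    have split :
        noMode op (0,true) (1,true) m (op (0,false) k (op (1,false) (n-k) w)) -
          op (0,false) k (op (1,false) (n-k) (noMode op (0,true) (1,true) m w)) =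
        (noMode op (0,true) (1,true) m (op (0,false) k (op (1,false) (n-k) w)) -
          op (0,false) k (noMode op (0,true) (1,true) m (op (1,false) (n-k) w))) +
          op (0,false) k (noMode op (0,true) (1,true) m (op (1,false) (n-k) w) -
            op (1,false) (n-k) (noMode op (0,true) (1,true) m w)) := by
      rw [map_sub]; abel
    rw [split, key_comm op hW hA pv_ba m (0,false) k (op (1,false) (n-k) w),
      key_comm op hW hA pv_ba m (1,false) (n-k) w,
      pv_bc, pv_ac, pv_bd, pv_ad, one_smul, one_smul, one_smul, one_smul, map_add]
    -- now: a(m+k)(d(n-k)w) + b(m+k)(d(n-k)w) + (c k (a(m+n-k) w) + c k (b(m+n-k) w))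
    have r1 := op_tmf op hW (1,false) (0,true) (m+k) (n-k) w
    have r2 := op_tmf op hW (1,false) (1,true) (m+k) (n-k) w
    have r3 := op_tmf' op hW (0,false) (0,true) (m+(n-k)) k w
    have r4 := op_tmf' op hW (0,false) (1,true) (m+(n-k)) k w
    rw [show m+k+(n-k) = m+n by ring] at r1 r2
    rw [show m+(n-k)+k = m+n by ring] at r3 r4
    rw [r1, r2, r3, r4, pv_ad, pv_bd, pv_ca, pv_cb]
    split_ifs <;> first | omega | module
  -- rewrite both sides as a single finsum and split
  have hs1 : (Function.support fun k =>
      noMode op (0,true) (1,true) m (tmf op (0,false) (1,false) n w k)).Finite := by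
    apply (tmf_support op hA (0,false) (1,false) n w).subset
    intro k hk
    simp only [Function.mem_support] at hk ⊢
    intro hc; exact hk (by rw [hc, noMode_zero])
  have hs2 := tmf_support op hA (0,false) (1,false) n
    (noMode op (0,true) (1,true) m w)
  rw [h1, noMode_eq_tmf op (0,false) (1,false) n (noMode op (0,true) (1,true) m w),
    ← finsum_sub_distrib hs1 hs2, finsum_congr hper]
  -- supports of the five pieces
  have hre : ∀ u v : WSym6,
      (Function.support fun k : ℤ => tmf op u v (m+n) w (n-k)).Finite := by
    intro u v
    apply Set.Finite.subset (((tmf_support op hA u v (m+n) w).preimage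
      (Function.Injective.injOn (sub_right_injective : Function.Injective fun k : ℤ => n - k))))
    intro k hk
    exact hk
  have hg1 := hre (1,false) (1,true)
  have hg2 := hre (1,false) (0,true)
  have hg3 := tmf_support op hA (0,false) (1,true) (m+n) w
  have hg4 := tmf_support op hA (0,false) (0,true) (m+n) w
  have hg5 : (Function.support fun k : ℤ => (if m + n = 0 then
      ((if n < k then (2:ℂ) else 0) + (if 0 ≤ k then (-2:ℂ) else 0)) • w else 0)).Finite := by
    apply (coeff_support n).subset
    intro k hk
    simp only [Function.mem_support] at hk ⊢
    intro hc
    exact hk (by rw [hc]; simp)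
  have hsum4 : (Function.support fun k : ℤ =>
      tmf op (1,false) (1,true) (m+n) w (n-k) + tmf op (1,false) (0,true) (m+n) w (n-k) +
        tmf op (0,false) (1,true) (m+n) w k + tmf op (0,false) (0,true) (m+n) w k).Finite := by
    apply Set.Finite.subset (((hg1.union hg2).union hg3).union hg4)
    intro k hk
    simp only [Function.mem_support] at hk
    by_contra hc
    simp only [Set.mem_union, Function.mem_support, not_or, not_not] at hc
    obtain ⟨⟨⟨c1, c2⟩, c3⟩, c4⟩ := hc
    exact hk (by rw [c1, c2, c3, c4]; simp)
  have hsum3 : (Function.support fun k : ℤ =>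
      tmf op (1,false) (1,true) (m+n) w (n-k) + tmf op (1,false) (0,true) (m+n) w (n-k) +
        tmf op (0,false) (1,true) (m+n) w k).Finite := by
    apply Set.Finite.subset ((hg1.union hg2).union hg3)
    intro k hk
    simp only [Function.mem_support] at hk
    by_contra hc
    simp only [Set.mem_union, Function.mem_support, not_or, not_not] at hc
    obtain ⟨⟨c1, c2⟩, c3⟩ := hc
    exact hk (by rw [c1, c2, c3]; simp)
  have hsum2 : (Function.support fun k : ℤ =>
      tmf op (1,false) (1,true) (m+n) w (n-k) +
        tmf op (1,false) (0,true) (m+n) w (n-k)).Finite := by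
    apply Set.Finite.subset (hg1.union hg2)
    intro k hk
    simp only [Function.mem_support] at hk
    by_contra hc
    simp only [Set.mem_union, Function.mem_support, not_or, not_not] at hc
    obtain ⟨c1, c2⟩ := hc
    exact hk (by rw [c1, c2]; simp)
  rw [finsum_add_distrib hsum4 hg5, finsum_add_distrib hsum3 hg4,
    finsum_add_distrib hsum2 hg3, finsum_add_distrib hg1 hg2]
  -- reindex the two shifted sums
  have hri : ∀ u v : WSym6,
      ∑ᶠ k : ℤ, tmf op u v (m+n) w (n-k) = noMode op u v (m+n) w := by
    intro u v
    rw [noMode_eq_tmf]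
    exact finsum_comp_equiv (Equiv.subLeft n)
  rw [hri, hri]
  -- evaluate the delta sum
  have hD : ∑ᶠ k : ℤ, (if m + n = 0 then
      ((if n < k then (2:ℂ) else 0) + (if 0 ≤ k then (-2:ℂ) else 0)) • w else 0) =
      (if m + n = 0 then (2 * (m:ℂ) - 2) • w else 0) := by
    by_cases h0 : m + n = 0
    · simp only [if_pos h0]
      rw [← finsum_smul' (coeff_support n), hsum_coeff n]
      have hn : (n : ℂ) = -(m : ℂ) := by
        have : n = -m := by omega
        rw [this]; push_cast; ring
      rw [hn]
      congr 1
      ring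
    · simp only [if_neg h0, finsum_zero]
  rw [hD]
  rfl

end Main

/-- in the six-symbol bosonic Weyl system, the affine (0-node)
commutation relation holds in mode form:
`[x₀⁺(m), x₀⁻(n)] = -½ α₀(m+n) + ((m-1)/2) δ_{m+n,0} id`. -/
theorem zero_node_commutator {W : Type*} [AddCommGroup W] [Module ℂ W]
    (op : WSym6 → ℤ → Module.End ℂ W)
    (hW : IsBosonicWeylSystem pair6 op) (hA : LocallyAnnihilating op)
    (m n : ℤ) (w : W) :
    xZeroPlus op m (xZeroMinus op n w) - xZeroMinus op n (xZeroPlus op m w) =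
      (-(1 / 2) : ℂ) • alZero op (m + n) w +
        (if m + n = 0 then (((m : ℂ) - 1) / 2) • w else 0) := by
  simp only [xZeroPlus, xZeroMinus, alZero]
  rw [noMode_smul, noMode_smul, smul_smul, smul_smul, ← smul_sub,
    main_comm op hW hA m n w]
  by_cases h0 : m + n = 0
  · simp only [if_pos h0]
    module
  · simp only [if_neg h0]
    module
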